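/- Let F be a stack in groupoids for the h-topology on finite type schemes over a Noetherian scheme, let f : Y → X be a proper surjective morphism, and suppose Y = Y₁ ∪ Y₂ for closed subschemes Y₁, Y₂ with f(Y₁ ∩ Y₂) = X₁ ∩ X₂ where Xᵢ = f(Yᵢ), and suppose the pullback functor F(X₁ ∩ X₂) → F(Y₁ ∩ Y₂) is fully faithful. Then an object ξ ∈ F(Y) lies in the essential image of f* : F(X) → F(Y) if and only if ξ|_{Y₁} lies in the essential image of F(X₁) → F(Y₁) and ξ|_{Y₂} lies in the essential image of F(X₂) → F(Y₂). -/

import Mathlib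

open CategoryTheory AlgebraicGeometry

/-- **Gluing essential images along a union of two closed pieces** (for a stack in
groupoids for the h-topology). Let `f : Y → X` be a proper surjective morphism of
Noetherian schemes, `Y = Y₁ ∪ Y₂` a union of closed subschemes with images
`Xᵢ = f(Yᵢ)` satisfying `f(Y₁ ∩ Y₂) = X₁ ∩ X₂`. Let `F` be a stack in groupoids
for the h-topology; below we record its values on the relevant schemes as abstract
groupoids `FX = F(X), FX₁ = F(X₁), FX₂ = F(X₂), FX₁₂ = F(X₁ ∩ X₂)`,
`FY, FY₁, FY₂, FY₁₂`, together with the restriction functors `aᵢ, bᵢ, cᵢ, dᵢ`, the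
pullback functors `u, u₁, u₂, u₁₂` along `f` and its restrictions, the coherence
isomorphisms between them, and the two instances of the stack (h-descent)
condition which the statement uses: effectivity of descent along the h-cover
`X₁ ⊔ X₂ → X` (`hdescX`) and separation for the h-cover `Y₁ ⊔ Y₂ → Y` (`hsepY`).
Assume that `u₁₂ : F(X₁ ∩ X₂) ⥤ F(Y₁ ∩ Y₂)` is fully faithful. Then an object
`ξ ∈ F(Y)` lies in the essential image of `u : F(X) ⥤ F(Y)` if and only if
`ξ|_{Y₁}` and `ξ|_{Y₂}` lie in the essential images of `F(X₁) ⥤ F(Y₁)` and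
`F(X₂) ⥤ F(Y₂)` respectively. -/
theorem stmt18
    -- the geometric situation:
    {Y X Y₁ Y₂ Y₁₂ X₁ X₂ X₁₂ : Scheme}
    [IsNoetherian X] [IsNoetherian Y]
    (f : Y ⟶ X) [IsProper f] [Surjective f]
    (j₁ : Y₁ ⟶ Y) (j₂ : Y₂ ⟶ Y) (j₁₂ : Y₁₂ ⟶ Y)
    (k₁ : X₁ ⟶ X) (k₂ : X₂ ⟶ X) (k₁₂ : X₁₂ ⟶ X)
    [IsClosedImmersion j₁] [IsClosedImmersion j₂] [IsClosedImmersion j₁₂]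
    [IsClosedImmersion k₁] [IsClosedImmersion k₂] [IsClosedImmersion k₁₂]
    (hY : Set.range j₁.base ∪ Set.range j₂.base = Set.univ)
    (hY12 : Set.range j₁₂.base = Set.range j₁.base ∩ Set.range j₂.base)
    (hX1 : Set.range k₁.base = f.base '' Set.range j₁.base)
    (hX2 : Set.range k₂.base = f.base '' Set.range j₂.base)
    (hX12 : Set.range k₁₂.base = Set.range k₁.base ∩ Set.range k₂.base)
    (himg : f.base '' Set.range j₁₂.base = Set.range k₁₂.base)
    -- the values of the stack `F` on the relevant schemes:
    {FX FX₁ FX₂ FX₁₂ FY FY₁ FY₂ FY₁₂ : Type*}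
    [Groupoid FX] [Groupoid FX₁] [Groupoid FX₂] [Groupoid FX₁₂]
    [Groupoid FY] [Groupoid FY₁] [Groupoid FY₂] [Groupoid FY₁₂]
    -- restriction functors on the `X`-side and on the `Y`-side:
    (a₁ : FX ⥤ FX₁) (a₂ : FX ⥤ FX₂) (b₁ : FX₁ ⥤ FX₁₂) (b₂ : FX₂ ⥤ FX₁₂)
    (c₁ : FY ⥤ FY₁) (c₂ : FY ⥤ FY₂) (d₁ : FY₁ ⥤ FY₁₂) (d₂ : FY₂ ⥤ FY₁₂)
    -- pullback functors along `f` and its restrictions: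
    (u : FX ⥤ FY) (u₁ : FX₁ ⥤ FY₁) (u₂ : FX₂ ⥤ FY₂) (u₁₂ : FX₁₂ ⥤ FY₁₂)
    -- coherence isomorphisms:
    (γX : a₁ ⋙ b₁ ≅ a₂ ⋙ b₂) (γY : c₁ ⋙ d₁ ≅ c₂ ⋙ d₂)
    (α₁ : a₁ ⋙ u₁ ≅ u ⋙ c₁) (α₂ : a₂ ⋙ u₂ ≅ u ⋙ c₂)
    (β₁ : b₁ ⋙ u₁₂ ≅ u₁ ⋙ d₁) (β₂ : b₂ ⋙ u₁₂ ≅ u₂ ⋙ d₂)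
    (hcoh :
      (Functor.associator a₁ b₁ u₁₂).symm ≪≫ Functor.isoWhiskerRight γX u₁₂ ≪≫
        Functor.associator a₂ b₂ u₁₂ ≪≫ Functor.isoWhiskerLeft a₂ β₂ ≪≫
        (Functor.associator a₂ u₂ d₂).symm ≪≫ Functor.isoWhiskerRight α₂ d₂ ≪≫
        Functor.associator u c₂ d₂ =
      Functor.isoWhiskerLeft a₁ β₁ ≪≫ (Functor.associator a₁ u₁ d₁).symm ≪≫
        Functor.isoWhiskerRight α₁ d₁ ≪≫ Functor.associator u c₁ d₁ ≪≫
        Functor.isoWhiskerLeft u γY)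
    -- h-descent along the cover `X₁ ⊔ X₂ → X` is effective:
    (hdescX : ∀ (ξ₁ : FX₁) (ξ₂ : FX₂) (φ : b₁.obj ξ₁ ≅ b₂.obj ξ₂),
      ∃ (η : FX) (e₁ : a₁.obj η ≅ ξ₁) (e₂ : a₂.obj η ≅ ξ₂),
        γX.hom.app η ≫ b₂.map e₂.hom = b₁.map e₁.hom ≫ φ.hom)
    -- objects of `F(Y)` are determined by their restrictions to `Y₁`, `Y₂`
    -- together with the comparison over `Y₁ ∩ Y₂`:
    (hsepY : ∀ (ξ ξ' : FY) (ψ₁ : c₁.obj ξ ≅ c₁.obj ξ') (ψ₂ : c₂.obj ξ ≅ c₂.obj ξ'),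
      γY.hom.app ξ ≫ d₂.map ψ₂.hom = d₁.map ψ₁.hom ≫ γY.hom.app ξ' →
      Nonempty (ξ ≅ ξ'))
    -- the hypothesis of the lemma: `F(X₁ ∩ X₂) → F(Y₁ ∩ Y₂)` is fully faithful:
    [u₁₂.Full] [u₁₂.Faithful]
    (ξ : FY) :
    (∃ η : FX, Nonempty (u.obj η ≅ ξ)) ↔
      ((∃ η₁ : FX₁, Nonempty (u₁.obj η₁ ≅ c₁.obj ξ)) ∧
        (∃ η₂ : FX₂, Nonempty (u₂.obj η₂ ≅ c₂.obj ξ))) := by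

  constructor
  · rintro ⟨η, ⟨e⟩⟩
    exact ⟨⟨a₁.obj η, ⟨α₁.app η ≪≫ c₁.mapIso e⟩⟩, ⟨a₂.obj η, ⟨α₂.app η ≪≫ c₂.mapIso e⟩⟩⟩
  · rintro ⟨⟨η₁, ⟨e₁⟩⟩, ⟨η₂, ⟨e₂⟩⟩⟩
    set φ : b₁.obj η₁ ≅ b₂.obj η₂ :=
      u₁₂.preimageIso (β₁.app η₁ ≪≫ d₁.mapIso e₁ ≪≫ γY.app ξ ≪≫ (d₂.mapIso e₂).symm
        ≪≫ (β₂.app η₂).symm) with hφ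
    obtain ⟨η, f₁, f₂, hdesc⟩ := hdescX η₁ η₂ φ
    have hcoh' : u₁₂.map (γX.hom.app η) ≫ β₂.hom.app (a₂.obj η) ≫ d₂.map (α₂.hom.app η)
        = β₁.hom.app (a₁.obj η) ≫ d₁.map (α₁.hom.app η) ≫ γY.hom.app (u.obj η) := by
      have h := congrArg (fun i => i.hom.app η) hcoh
      simpa using h
    have hφmap : u₁₂.map φ.hom
        = β₁.hom.app η₁ ≫ d₁.map e₁.hom ≫ γY.hom.app ξ ≫ d₂.map e₂.inv ≫ β₂.inv.app η₂ := by
      simp [hφ]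
    refine ⟨η, hsepY (u.obj η) ξ
      ((α₁.app η).symm ≪≫ u₁.mapIso f₁ ≪≫ e₁)
      ((α₂.app η).symm ≪≫ u₂.mapIso f₂ ≪≫ e₂) ?_⟩
    have key : γY.hom.app (u.obj η)
        = d₁.map (α₁.inv.app η) ≫ β₁.inv.app (a₁.obj η) ≫ u₁₂.map (γX.hom.app η)
          ≫ β₂.hom.app (a₂.obj η) ≫ d₂.map (α₂.hom.app η) := by
      rw [hcoh']
      simp [← Functor.map_comp_assoc, ← d₁.map_comp_assoc]
    have nat₂ : β₂.hom.app (a₂.obj η) ≫ d₂.map (u₂.map f₂.hom)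
        = u₁₂.map (b₂.map f₂.hom) ≫ β₂.hom.app η₂ := by
      simpa using (β₂.hom.naturality f₂.hom).symm
    have nat₁ : u₁₂.map (b₁.map f₁.hom) ≫ β₁.hom.app η₁
        = β₁.hom.app (a₁.obj η) ≫ d₁.map (u₁.map f₁.hom) := by
      simpa using β₁.hom.naturality f₁.hom
    have hdesc' : u₁₂.map (γX.hom.app η) ≫ u₁₂.map (b₂.map f₂.hom)
        = u₁₂.map (b₁.map f₁.hom) ≫ u₁₂.map φ.hom := by
      rw [← u₁₂.map_comp, ← u₁₂.map_comp, hdesc]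
    calc γY.hom.app (u.obj η) ≫ d₂.map ((α₂.app η).symm ≪≫ u₂.mapIso f₂ ≪≫ e₂).hom
        = (d₁.map (α₁.inv.app η) ≫ β₁.inv.app (a₁.obj η))
            ≫ (u₁₂.map (γX.hom.app η) ≫ u₁₂.map (b₂.map f₂.hom))
            ≫ β₂.hom.app η₂ ≫ d₂.map e₂.hom := by
          rw [key]
          simp only [Iso.trans_hom, Iso.symm_hom, Functor.mapIso_hom, Functor.map_comp,
            Category.assoc]
          simp only [Iso.app_inv]
          rw [← Functor.map_comp_assoc, Iso.hom_inv_id_app]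
          simp [reassoc_of% nat₂]
      _ = d₁.map (α₁.inv.app η) ≫ β₁.inv.app (a₁.obj η)
            ≫ u₁₂.map (b₁.map f₁.hom) ≫ u₁₂.map φ.hom ≫ β₂.hom.app η₂ ≫ d₂.map e₂.hom := by
          simp only [Category.assoc]
          rw [reassoc_of% hdesc']
      _ = d₁.map (α₁.inv.app η) ≫ β₁.inv.app (a₁.obj η) ≫ β₁.hom.app (a₁.obj η)
            ≫ d₁.map (u₁.map f₁.hom) ≫ d₁.map e₁.hom ≫ γY.hom.app ξ := by
          rw [hφmap]
          rw [← reassoc_of% nat₁]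
          simp [← d₂.map_comp_assoc]
      _ = d₁.map ((α₁.app η).symm ≪≫ u₁.mapIso f₁ ≪≫ e₁).hom ≫ γY.hom.app ξ := by
          simp
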